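/- arXiv:2603.23908 — 2 statements merged into one kernel-verified Lean document; each statement's English description precedes it below -/
import Mathlib

section
/- Commutator bound, L² version (Lemma 5.2, bound (com1)): Let s > (d+1)/2. There is a constant C, depending on d, s and k, such that for every f ∈ H^{s,1/2}(𝕋^d) and every trigonometric polynomial u on 𝕋^d, ‖f·P[∂_α u] − P[f·∂_α u]‖_{L²(𝕋^d)} ≤ C ‖f‖_{H^{s,1/2}} ‖u‖_{L²(𝕋^d)}; consequently the commutator [f,P]∂_α extends to a bounded operator on L²(𝕋^d) with operator norm at most C‖f‖_{H^{s,1/2}}. -/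
noncomputable section
open scoped BigOperators
open Filter

/-- The frequency lattice `ℤ^d` of the torus `𝕋^d`. -/
abbrev Freq (d : ℕ) := Fin d → ℤ

/-- A function on `𝕋^d`, represented by its sequence of Fourier coefficients. -/
abbrev Coeffs (d : ℕ) := Freq d → ℂ

variable {d : ℕ}

/-- The pairing `⟨j, k⟩` between a lattice frequency and the frequency vector `k ∈ ℝ^d`. -/
def dotk (k : Fin d → ℝ) (j : Freq d) : ℝ := ∑ i, (j i : ℝ) * k i

/-- The Japanese bracket `⟨j⟩ = (1+|j|²)^{1/2}`. -/
def jb (j : Freq d) : ℝ := Real.sqrt (1 + ∑ i, ((j i : ℝ)) ^ 2)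

/-- The entries of `k` are linearly independent over `ℚ` (equivalently, over `ℤ`). -/
def Indep (k : Fin d → ℝ) : Prop := ∀ j : Freq d, dotk k j = 0 → j = 0

/-- The weight defining the anisotropic Sobolev norm `H^{s,θ}`. -/
def wt (k : Fin d → ℝ) (s θ : ℝ) (j : Freq d) : ℝ :=
  jb j ^ (2 * s) * (1 + (dotk k j) ^ 2) ^ θ

/-- Membership in the anisotropic Sobolev space `H^{s,θ}(𝕋^d)`. -/
def MemSob (k : Fin d → ℝ) (s θ : ℝ) (u : Coeffs d) : Prop :=
  Summable (fun j : Freq d => wt k s θ j * ‖u j‖ ^ 2)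

/-- The `H^{s,θ}(𝕋^d)` norm. -/
def sobNorm (k : Fin d → ℝ) (s θ : ℝ) (u : Coeffs d) : ℝ :=
  Real.sqrt (∑' j : Freq d, wt k s θ j * ‖u j‖ ^ 2)

/-- Membership in the Sobolev space `H^s(𝕋^d)`; `H^0 = L²`. -/
def MemHs (s : ℝ) (u : Coeffs d) : Prop :=
  Summable (fun j : Freq d => jb j ^ (2 * s) * ‖u j‖ ^ 2)

/-- The `H^s(𝕋^d)` norm; for `s = 0` this is the `L²(𝕋^d)` norm (spectrally normalized). -/
def HsNorm (s : ℝ) (u : Coeffs d) : ℝ :=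
  Real.sqrt (∑' j : Freq d, jb j ^ (2 * s) * ‖u j‖ ^ 2)

/-- The value of the function with Fourier coefficients `u` at the point `α ∈ 𝕋^d = ℝ^d/(2πℤ)^d`,
namely `Σ_j û_j e^{i⟨j,α⟩}`. -/
def value (u : Coeffs d) (α : Fin d → ℝ) : ℂ :=
  ∑' j : Freq d, u j * Complex.exp (Complex.I * ((∑ i, (j i : ℝ) * α i : ℝ) : ℂ))

/-- The squared norm of the space `ℋ^σ = H^σ × H^{σ,1/2}`. -/
def HHnormSq (k : Fin d → ℝ) (σ : ℝ) (W R : Coeffs d) : ℝ :=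
  HsNorm σ W ^ 2 + sobNorm k σ (1/2) R ^ 2

/-- The norm of the space `ℋ^σ = H^σ × H^{σ,1/2}`. -/
def HHnorm (k : Fin d → ℝ) (σ : ℝ) (W R : Coeffs d) : ℝ :=
  Real.sqrt (HHnormSq k σ W R)

/-- Membership in `ℋ^σ = H^σ × H^{σ,1/2}`. -/
def MemHH (k : Fin d → ℝ) (σ : ℝ) (W R : Coeffs d) : Prop :=
  MemHs σ W ∧ MemSob k σ (1/2) R

/-- The directional derivative `∂_α = k₁∂₁+⋯+k_d∂_d`, acting on Fourier coefficients
by multiplication by `i⟨j,k⟩`. -/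
def dAl (k : Fin d → ℝ) (u : Coeffs d) : Coeffs d :=
  fun j => Complex.I * (dotk k j : ℝ) * u j

/-- The projection `P`: the Fourier multiplier which is `1` for `⟨j,k⟩ < 0`, `1/2`
at the zero mode, `0` for `⟨j,k⟩ > 0`. -/
def Pp (k : Fin d → ℝ) (u : Coeffs d) : Coeffs d := fun j =>
  if dotk k j < 0 then u j else if dotk k j = 0 then u j / 2 else 0

/-- The complementary projection `P̄ = I - P`. -/
def Pb (k : Fin d → ℝ) (u : Coeffs d) : Coeffs d := u - Pp k u

/-- The Fourier coefficients of the complex conjugate function. -/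
def conjC (u : Coeffs d) : Coeffs d := fun j => (starRingEnd ℂ) (u (-j))

/-- The Fourier coefficients of the product of two functions (convolution). -/
def cmul (u v : Coeffs d) : Coeffs d := fun j => ∑' m : Freq d, u m * v (j - m)

/-- The Fourier coefficients of the constant function `1`. -/
def oneC : Coeffs d := fun j => if j = 0 then 1 else 0

/-- `u` is holomorphic: its Fourier coefficients vanish for `⟨j,k⟩ > 0`. -/
def Holo (k : Fin d → ℝ) (u : Coeffs d) : Prop := ∀ j : Freq d, 0 < dotk k j → u j = 0

/-- The coefficients of `2 Re u`. -/
def twoRe (u : Coeffs d) : Coeffs d := u + conjC u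

/-- The coefficients of `2 Im u`. -/
def twoIm (u : Coeffs d) : Coeffs d := fun j => (u j - conjC u j) / Complex.I

/-- The coefficients of `u²`. -/
def csq (u : Coeffs d) : Coeffs d := cmul u u

/-- The coefficients of `|u|² = u·conj(u)`. -/
def absSqC (u : Coeffs d) : Coeffs d := cmul u (conjC u)

/-- The advection velocity `b := 2 Re P[R(1-conj Y)]`. -/
def bC (k : Fin d → ℝ) (R Y : Coeffs d) : Coeffs d :=
  twoRe (Pp k (cmul R (oneC - conjC Y)))

/-- The frequency shift `a := i(P̄[conj(R)·R_α] - P[R·conj(R)_α])`. -/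
def aCf (k : Fin d → ℝ) (R : Coeffs d) : Coeffs d := fun j =>
  Complex.I * ((Pb k (cmul (conjC R) (dAl k R)) - Pp k (cmul R (dAl k (conjC R)))) j)

/-- The auxiliary function
`M := P̄[conj(R)·Y_α − R_α·conj(Y)] + P[R·conj(Y)_α − conj(R)_α·Y]`. -/
def MCf (k : Fin d → ℝ) (R Y : Coeffs d) : Coeffs d :=
  Pb k (cmul (conjC R) (dAl k Y) - cmul (dAl k R) (conjC Y))
    + Pp k (cmul R (dAl k (conjC Y)) - cmul (dAl k (conjC R)) Y)

/-- `(W,R,Y)` solves the differentiated gravity water wave system on the time interval `I`: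
`𝐖_t + b·𝐖_α + (1+𝐖)(1−conj Y)·R_α = (1+𝐖)M` and `R_t + b·R_α = i(Y − a(1−Y))`,
where `Y = 𝐖/(1+𝐖)` (equivalently `(1+𝐖)·Y = 𝐖`), so that
`(1+𝐖)/(1+conj 𝐖) = (1+𝐖)(1−conj Y)` and `i(𝐖−a)/(1+𝐖) = i(Y − a(1−Y))`. -/
structure IsWWSol (k : Fin d → ℝ) (I : Set ℝ) (W R Y : ℝ → Coeffs d) : Prop where
  holoW : ∀ t ∈ I, Holo k (W t)
  holoR : ∀ t ∈ I, Holo k (R t)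
  Ymem : ∀ t ∈ I, MemHs 0 (Y t)
  Ydef : ∀ t ∈ I, cmul (oneC + W t) (Y t) = W t
  eqW : ∀ t ∈ I, ∀ j : Freq d,
    HasDerivWithinAt (fun τ => W τ j)
      ((cmul (oneC + W t) (MCf k (R t) (Y t))
        - cmul (bC k (R t) (Y t)) (dAl k (W t))
        - cmul (cmul (oneC + W t) (oneC - conjC (Y t))) (dAl k (R t))) j) I t
  eqR : ∀ t ∈ I, ∀ j : Freq d,
    HasDerivWithinAt (fun τ => R τ j)
      ((Complex.I • (Y t - cmul (aCf k (R t)) (oneC - Y t))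
        - cmul (bC k (R t) (Y t)) (dAl k (R t))) j) I t


/-! ### Auxiliary lemmas for `commutator_L2` -/

/-- The scalar symbol of the projection `P`. -/
def pfR (x : ℝ) : ℝ := if x < 0 then 1 else if x = 0 then 1/2 else 0

lemma Pp_eq_mul (k : Fin d → ℝ) (w : Coeffs d) (j : Freq d) :
    Pp k w j = (pfR (dotk k j) : ℂ) * w j := by
  simp only [Pp, pfR]
  split_ifs <;> push_cast <;> ring

lemma abs_pf_diff (a b : ℝ) : |a| * |pfR a - pfR b| ≤ |b - a| := by
  have h1 : -(b-a) ≤ |b - a| := neg_le_abs _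
  have h2 : (b-a) ≤ |b - a| := le_abs_self _
  have h0 : (0:ℝ) ≤ |b - a| := abs_nonneg _
  unfold pfR
  split_ifs with ha hb hb' ha' hb hb' hb hb' <;>
    simp_all [abs_of_neg, abs_of_pos, abs_of_nonneg, abs_of_nonpos] <;>
    norm_num <;>
    nlinarith [abs_nonneg a, le_abs_self a, neg_le_abs a,
      abs_of_pos (show (0:ℝ) < 1/2 by norm_num)]

lemma dotk_sub (k : Fin d → ℝ) (j n : Freq d) : dotk k (j - n) = dotk k j - dotk k n := by
  simp only [dotk, Pi.sub_apply, Int.cast_sub, sub_mul, Finset.sum_sub_distrib]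

lemma jb_pos (j : Freq d) : 0 < jb j := Real.sqrt_pos.mpr (by positivity)

lemma summable_nat_aux {r : ℝ} (hr : 1 < 2*r) :
    Summable (fun n : ℕ => (1 + (n:ℝ)^2) ^ (-r)) := by
  rw [← summable_nat_add_iff 1]
  have h2 : Summable (fun n : ℕ => ((n:ℝ)) ^ (-(2*r))) :=
    Real.summable_nat_rpow.mpr (by linarith)
  have h3 : Summable (fun n : ℕ => (((n:ℝ)+1)) ^ (-(2*r))) := by
    have := (summable_nat_add_iff 1).mpr h2
    exact this.congr (fun n => by push_cast; ring_nf)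
  apply h3.of_nonneg_of_le (fun n => by positivity)
  intro n
  have hb : (0:ℝ) < ((n:ℝ)+1) := by positivity
  have key : ((n:ℝ)+1) ^ (-(2*r)) = (((n:ℝ)+1)^(2:ℕ)) ^ (-r) := by
    rw [← Real.rpow_natCast ((n:ℝ)+1) 2, ← Real.rpow_mul hb.le]; norm_num
  rw [key]
  have h4 : (((n:ℝ)+1)^(2:ℕ)) ≤ 1 + (((n+1 : ℕ)):ℝ)^2 := by
    push_cast; nlinarith
  exact Real.rpow_le_rpow_of_nonpos (by positivity) (by push_cast at h4 ⊢; linarith)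
    (by linarith)

lemma summable_int_aux {r : ℝ} (hr : 1 < 2*r) :
    Summable (fun n : ℤ => (1 + (n:ℝ)^2) ^ (-r)) := by
  apply Summable.of_nat_of_neg
  · exact (summable_nat_aux hr).congr (fun n => by norm_num)
  · exact (summable_nat_aux hr).congr (fun n => by push_cast; ring_nf)

set_option maxHeartbeats 1000000 in
lemma summable_pi_prod : ∀ (n : ℕ) (c : ℤ → ℝ), (∀ x, 0 ≤ c x) → Summable c →
    Summable (fun j : Fin n → ℤ => ∏ i, c (j i)) := by
  intro n
  induction n with
  | zero =>
    intro c _ _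
    exact summable_of_finite_support (Set.toFinite _)
  | succ m ih =>
    intro c hc hcs
    have h : Summable (fun p : ℤ × (Fin m → ℤ) => c p.1 * ∏ i, c (p.2 i)) :=
      Summable.mul_of_nonneg (f := c) (g := fun j : Fin m → ℤ => ∏ i, c (j i))
        hcs (ih c hc hcs) hc (fun j => Finset.prod_nonneg fun i _ => hc _)
    have h2 : Summable ((fun j : Fin (m+1) → ℤ => ∏ i, c (j i)) ∘ (Fin.consEquiv (fun _ => ℤ))) := by
      apply h.congr
      intro p
      simp [Fin.consEquiv, Fin.prod_univ_succ]
    exact (Equiv.summable_iff (Fin.consEquiv (fun _ => ℤ))).mp h2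

lemma summable_jb_rpow {d : ℕ} (hd : 1 ≤ d) {t : ℝ} (ht : (d:ℝ) < t) :
    Summable (fun j : Freq d => jb j ^ (-t)) := by
  have hd0 : (0:ℝ) < d := by exact_mod_cast hd
  set r : ℝ := t / (2*d) with hr
  have hr1 : 1 < 2*r := by
    rw [hr, show 2*(t/(2*(d:ℝ))) = t/d by field_simp, lt_div_iff₀ hd0]
    linarith
  have hrpos : 0 < r := by nlinarith
  apply Summable.of_nonneg_of_le (fun j => Real.rpow_nonneg (jb_pos j).le _) ?_
    (summable_pi_prod d (fun x : ℤ => (1 + (x:ℝ)^2) ^ (-r)) (fun x => by positivity)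
      (summable_int_aux hr1))
  intro j
  have hx : (0:ℝ) < 1 + ∑ i, ((j i:ℝ))^2 := by positivity
  have e1 : jb j ^ (-t) = (1 + ∑ i, ((j i:ℝ))^2) ^ (-(t/2)) := by
    rw [jb, Real.sqrt_eq_rpow, ← Real.rpow_mul hx.le]
    congr 1; ring
  have e2 : ∏ i, (1 + ((j i:ℝ))^2) ^ (-r) = (∏ i, (1 + ((j i:ℝ))^2)) ^ (-r) :=
    Real.finset_prod_rpow _ _ (fun i _ => by positivity) _
  have hprod_le : ∏ i, (1 + ((j i:ℝ))^2) ≤ (1 + ∑ i, ((j i:ℝ))^2) ^ (d:ℕ) := by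
    calc ∏ i, (1 + ((j i:ℝ))^2) ≤ ∏ _i : Fin d, (1 + ∑ i', ((j i':ℝ))^2) := by
          apply Finset.prod_le_prod (fun i _ => by positivity)
          intro i _
          have h5 := Finset.single_le_sum (f := fun i' => ((j i':ℝ))^2)
            (fun i' _ => sq_nonneg _) (Finset.mem_univ i)
          change ((j i:ℝ))^2 ≤ ∑ i', ((j i':ℝ))^2 at h5
          linarith
      _ = (1 + ∑ i', ((j i':ℝ))^2) ^ (d:ℕ) := by
          rw [Finset.prod_const]; simp
  have e3 : ((1 + ∑ i, ((j i:ℝ))^2) ^ (d:ℕ)) ^ (-r) = (1 + ∑ i, ((j i:ℝ))^2) ^ (-(t/2)) := by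
    rw [← Real.rpow_natCast _ d, ← Real.rpow_mul hx.le]
    congr 1
    rw [hr]; field_simp
  rw [e1, e2, ← e3]
  exact Real.rpow_le_rpow_of_nonpos (Finset.prod_pos (fun i _ => by positivity)) hprod_le
    (by linarith)

lemma tsum_mul_le_sqrt {ι : Type*} {a b : ι → ℝ} (ha : ∀ i, 0 ≤ a i) (hb : ∀ i, 0 ≤ b i)
    (hA : Summable (fun i => a i ^ 2)) (hB : Summable (fun i => b i ^ 2)) :
    Summable (fun i => a i * b i) ∧
    ∑' i, a i * b i ≤ Real.sqrt (∑' i, a i ^ 2) * Real.sqrt (∑' i, b i ^ 2) := by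
  have hsum : Summable (fun i => a i * b i) := by
    apply Summable.of_nonneg_of_le (fun i => mul_nonneg (ha i) (hb i))
      (fun i => ?_) ((hA.add hB).mul_left (1/2))
    nlinarith [sq_nonneg (a i - b i)]
  refine ⟨hsum, Summable.tsum_le_of_sum_le hsum fun F => ?_⟩
  calc ∑ i ∈ F, a i * b i
      ≤ Real.sqrt (∑ i ∈ F, a i ^ 2) * Real.sqrt (∑ i ∈ F, b i ^ 2) :=
        Real.sum_mul_le_sqrt_mul_sqrt F a b
    _ ≤ Real.sqrt (∑' i, a i ^ 2) * Real.sqrt (∑' i, b i ^ 2) := by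
        apply mul_le_mul (Real.sqrt_le_sqrt (Summable.sum_le_tsum F (fun i _ => sq_nonneg _) hA))
          (Real.sqrt_le_sqrt (Summable.sum_le_tsum F (fun i _ => sq_nonneg _) hB))
          (Real.sqrt_nonneg _) (Real.sqrt_nonneg _)


set_option maxHeartbeats 2000000 in
/-- **Lemma 5.2, bound (com1) (Commutator bound, `L²` version).** Let `s > (d+1)/2`.
There is a constant `C = C(d,s,k)` such that for every `f ∈ H^{s,1/2}(𝕋^d)` and every
trigonometric polynomial `u` on `𝕋^d`,
`‖f·P[∂_α u] − P[f·∂_α u]‖_{L²} ≤ C ‖f‖_{H^{s,1/2}} ‖u‖_{L²}`;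
consequently `[f,P]∂_α` extends to a bounded operator on `L²(𝕋^d)`. -/
theorem commutator_L2
    (d : ℕ) (hd : 1 ≤ d) (k : Fin d → ℝ) (hk : Indep k)
    (s : ℝ) (hs : ((d : ℝ) + 1) / 2 < s) :
    ∃ C : ℝ, 0 < C ∧
      ∀ f u : Coeffs d, MemSob k s (1/2) f → (Function.support u).Finite →
        HsNorm 0 (cmul f (Pp k (dAl k u)) - Pp k (cmul f (dAl k u)))
          ≤ C * sobNorm k s (1/2) f * HsNorm 0 u := by
  classical
  have htd : (d:ℝ) < 2*s - 1 := by linarith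
  have hB : Summable (fun j : Freq d => jb j ^ (-(2*s-1))) := summable_jb_rpow hd htd
  set K : ℝ := Real.sqrt (1 + ∑ i, (k i)^2) with hKdef
  have hK0 : 0 ≤ K := Real.sqrt_nonneg _
  set A : ℝ := K * ∑' j : Freq d, jb j ^ (-(2*s-1)) with hAdef
  have hA0 : 0 ≤ A :=
    mul_nonneg hK0 (tsum_nonneg fun j => Real.rpow_nonneg (jb_pos j).le _)
  refine ⟨Real.sqrt A + 1, by positivity, ?_⟩
  intro f u hf hu
  have hwt : ∀ m : Freq d, 0 < wt k s (1/2) m := fun m =>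
    mul_pos (Real.rpow_pos_of_pos (jb_pos m) _) (Real.rpow_pos_of_pos (by positivity) _)
  set g : Freq d → ℝ := fun m => |dotk k m| * ‖f m‖ with hgdef
  have hg0 : ∀ m, 0 ≤ g m := fun m => mul_nonneg (abs_nonneg _) (norm_nonneg _)
  set a : Freq d → ℝ := fun m => |dotk k m| / Real.sqrt (wt k s (1/2) m) with hadef
  set b : Freq d → ℝ := fun m => Real.sqrt (wt k s (1/2) m) * ‖f m‖ with hbdef
  have hb2 : ∀ m, b m ^ 2 = wt k s (1/2) m * ‖f m‖ ^ 2 := fun m => by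
    simp only [hbdef]; rw [mul_pow, Real.sq_sqrt (hwt m).le]
  have hBf : Summable (fun m => b m ^ 2) := by
    apply hf.congr; intro m; rw [hb2 m]
  have ha2 : ∀ m, a m ^ 2 ≤ K * jb m ^ (-(2*s-1)) := by
    intro m
    have h1 : a m ^ 2 = (dotk k m)^2 / wt k s (1/2) m := by
      simp only [hadef]; rw [div_pow, sq_abs, Real.sq_sqrt (hwt m).le]
    rw [h1]
    have hD : Real.sqrt (1 + (dotk k m)^2) ≤ K * jb m := by
      rw [hKdef, jb, ← Real.sqrt_mul (by positivity)]
      apply Real.sqrt_le_sqrt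
      have hcs := Finset.sum_mul_sq_le_sq_mul_sq Finset.univ (fun i => ((m i : ℝ))) k
      have hdot : (dotk k m)^2 ≤ (∑ i, ((m i:ℝ))^2) * (∑ i, (k i)^2) := by
        simpa [dotk] using hcs
      nlinarith [Finset.sum_nonneg (fun i (_ : i ∈ Finset.univ) => sq_nonneg ((m i : ℝ))),
                 Finset.sum_nonneg (fun i (_ : i ∈ Finset.univ) => sq_nonneg (k i))]
    have hwteq : wt k s (1/2) m = jb m ^ (2*s) * Real.sqrt (1 + (dotk k m)^2) := by
      rw [wt, Real.sqrt_eq_rpow]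
    rw [hwteq]
    have hjb2s : 0 < jb m ^ (2*s) := Real.rpow_pos_of_pos (jb_pos m) _
    have hsq : 0 < Real.sqrt (1 + (dotk k m)^2) := Real.sqrt_pos.mpr (by positivity)
    rw [div_le_iff₀ (by positivity)]
    have h2 : (dotk k m)^2 ≤ Real.sqrt (1+(dotk k m)^2) * Real.sqrt (1+(dotk k m)^2) := by
      rw [Real.mul_self_sqrt (by positivity)]; nlinarith
    have h3 : jb m ^ (-(2*s-1)) * jb m ^ (2*s) = jb m := by
      rw [← Real.rpow_add (jb_pos m), show -(2*s-1) + 2*s = 1 by ring, Real.rpow_one]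
    calc (dotk k m)^2
        ≤ Real.sqrt (1+(dotk k m)^2) * Real.sqrt (1+(dotk k m)^2) := h2
      _ ≤ (K * jb m) * Real.sqrt (1+(dotk k m)^2) :=
          mul_le_mul_of_nonneg_right hD hsq.le
      _ = K * (jb m ^ (-(2*s-1)) * jb m ^ (2*s)) * Real.sqrt (1+(dotk k m)^2) := by
          rw [h3]
      _ = K * jb m ^ (-(2*s-1)) * (jb m ^ (2*s) * Real.sqrt (1+(dotk k m)^2)) := by
          ring
  have hA2sum : Summable (fun m => a m ^ 2) :=
    Summable.of_nonneg_of_le (fun m => sq_nonneg _) ha2 (hB.mul_left K)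
  have hA2le : ∑' m, a m ^ 2 ≤ A := by
    rw [hAdef, ← tsum_mul_left]
    exact Summable.tsum_le_tsum ha2 hA2sum (hB.mul_left K)
  have hab : ∀ m, a m * b m = g m := by
    intro m
    have hne : Real.sqrt (wt k s (1/2) m) ≠ 0 := (Real.sqrt_pos.mpr (hwt m)).ne'
    simp only [hadef, hbdef, hgdef]
    field_simp
  obtain ⟨hgsum0, hgle⟩ := tsum_mul_le_sqrt
    (fun m => div_nonneg (abs_nonneg _) (Real.sqrt_nonneg _))
    (fun m => mul_nonneg (Real.sqrt_nonneg _) (norm_nonneg _)) hA2sum hBf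
  have hgsum : Summable g := hgsum0.congr hab
  set G := ∑' m, g m with hGdef
  have hG0 : 0 ≤ G := tsum_nonneg hg0
  have hGle : G ≤ Real.sqrt A * sobNorm k s (1/2) f := by
    have e1 : G = ∑' m, a m * b m := (tsum_congr hab).symm
    have e2 : sobNorm k s (1/2) f = Real.sqrt (∑' m, b m ^ 2) := by
      rw [sobNorm]; congr 1; exact tsum_congr (fun m => (hb2 m).symm)
    rw [e1, e2]
    exact hgle.trans (mul_le_mul_of_nonneg_right (Real.sqrt_le_sqrt hA2le)
      (Real.sqrt_nonneg _))
  -- the commutator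
  set S := hu.toFinset with hSdef
  have hu0 : ∀ n, n ∉ S → u n = 0 := by
    intro n hn
    by_contra h
    exact hn (hu.mem_toFinset.mpr h)
  have hdAl0 : ∀ n, u n = 0 → dAl k u n = 0 := fun n h => by simp [dAl, h]
  have hPz : ∀ (w : Coeffs d) (n : Freq d), w n = 0 → Pp k w n = 0 := fun w n h => by
    rw [Pp_eq_mul, h, mul_zero]
  have cml : ∀ v : Coeffs d, (∀ n, u n = 0 → v n = 0) → ∀ j,
      cmul f v j = ∑ n ∈ S, f (j - n) * v n := by
    intro v hv j
    calc cmul f v j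
        = ∑' n, f ((Equiv.subLeft j) n) * v (j - (Equiv.subLeft j) n) :=
          ((Equiv.subLeft j).tsum_eq (fun m => f m * v (j - m))).symm
      _ = ∑' n, f (j - n) * v n := tsum_congr (fun n => by
          simp [Equiv.subLeft_apply, sub_sub_cancel])
      _ = ∑ n ∈ S, f (j - n) * v n :=
          tsum_eq_sum (fun n hn => by rw [hv n (hu0 n hn), mul_zero])
  set com := cmul f (Pp k (dAl k u)) - Pp k (cmul f (dAl k u)) with hcomdef
  have hcom : ∀ j, com j
      = ∑ n ∈ S, f (j - n) * (Complex.I * ((dotk k n : ℝ) : ℂ) * u n) *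
          (((pfR (dotk k n) - pfR (dotk k j) : ℝ)) : ℂ) := by
    intro j
    have h1 := cml (Pp k (dAl k u)) (fun n h => hPz _ _ (hdAl0 n h)) j
    have h2 := cml (dAl k u) hdAl0 j
    simp only [hcomdef, Pi.sub_apply]
    rw [h1, Pp_eq_mul, h2, Finset.mul_sum, ← Finset.sum_sub_distrib]
    apply Finset.sum_congr rfl
    intro n _
    rw [Pp_eq_mul]
    simp only [dAl]
    push_cast
    ring
  have hgb : ∀ j, ‖com j‖ ≤ ∑ n ∈ S, g (j - n) * ‖u n‖ := by
    intro j
    rw [hcom j]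
    refine (norm_sum_le _ _).trans (Finset.sum_le_sum fun n _ => ?_)
    have e0 : ‖f (j - n) * (Complex.I * ((dotk k n : ℝ) : ℂ) * u n) *
          (((pfR (dotk k n) - pfR (dotk k j) : ℝ)) : ℂ)‖
        = ‖f (j - n)‖ * (|dotk k n| * ‖u n‖) * |pfR (dotk k n) - pfR (dotk k j)| := by
      simp only [norm_mul, Complex.norm_I, Complex.norm_real, Real.norm_eq_abs, mul_one]
      ring
    rw [e0]
    have hkey : |dotk k n| * |pfR (dotk k n) - pfR (dotk k j)| ≤ |dotk k (j - n)| := by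
      rw [dotk_sub, show dotk k j - dotk k n = dotk k j - dotk k n from rfl]
      exact abs_pf_diff _ _
    calc ‖f (j - n)‖ * (|dotk k n| * ‖u n‖) * |pfR (dotk k n) - pfR (dotk k j)|
        = (|dotk k n| * |pfR (dotk k n) - pfR (dotk k j)|) * (‖f (j - n)‖ * ‖u n‖) := by
          ring
      _ ≤ |dotk k (j - n)| * (‖f (j - n)‖ * ‖u n‖) :=
          mul_le_mul_of_nonneg_right hkey (by positivity)
      _ = g (j - n) * ‖u n‖ := by simp only [hgdef]; ring
  have hHs : ∀ j, ‖com j‖^2 ≤ G * ∑ n ∈ S, g (j - n) * ‖u n‖^2 := by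
    intro j
    have h1 : ‖com j‖^2 ≤ (∑ n ∈ S, g (j - n) * ‖u n‖)^2 :=
      pow_le_pow_left₀ (norm_nonneg _) (hgb j) 2
    have h2 : (∑ n ∈ S, g (j - n) * ‖u n‖)^2
        ≤ (∑ n ∈ S, g (j - n)) * ∑ n ∈ S, g (j - n) * ‖u n‖^2 := by
      have hcs := Finset.sum_mul_sq_le_sq_mul_sq S
        (fun n => Real.sqrt (g (j - n))) (fun n => Real.sqrt (g (j - n)) * ‖u n‖)
      have e1 : ∑ n ∈ S, Real.sqrt (g (j - n)) * (Real.sqrt (g (j - n)) * ‖u n‖)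
          = ∑ n ∈ S, g (j - n) * ‖u n‖ :=
        Finset.sum_congr rfl (fun n _ => by
          rw [← mul_assoc, Real.mul_self_sqrt (hg0 _)])
      have e2 : ∑ n ∈ S, (Real.sqrt (g (j - n)))^2 = ∑ n ∈ S, g (j - n) :=
        Finset.sum_congr rfl (fun n _ => Real.sq_sqrt (hg0 _))
      have e3 : ∑ n ∈ S, (Real.sqrt (g (j - n)) * ‖u n‖)^2
          = ∑ n ∈ S, g (j - n) * ‖u n‖^2 :=
        Finset.sum_congr rfl (fun n _ => by
          rw [mul_pow, Real.sq_sqrt (hg0 _)])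
      rw [e1, e2, e3] at hcs
      exact hcs
    have h3 : ∑ n ∈ S, g (j - n) ≤ G := by
      have einj : Set.InjOn (fun n => j - n) S := fun x _ y _ h => by
        have := sub_right_injective (G := Freq d) h
        exact this
      rw [show ∑ n ∈ S, g (j - n) = ∑ m ∈ S.image (fun n => j - n), g m from
        (Finset.sum_image (fun x hx y hy h => einj hx hy h)).symm]
      exact Summable.sum_le_tsum _ (fun m _ => hg0 m) hgsum
    have h4 : 0 ≤ ∑ n ∈ S, g (j - n) * ‖u n‖^2 :=
      Finset.sum_nonneg (fun n _ => mul_nonneg (hg0 _) (sq_nonneg _))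
    calc ‖com j‖^2 ≤ (∑ n ∈ S, g (j - n) * ‖u n‖)^2 := h1
      _ ≤ (∑ n ∈ S, g (j - n)) * ∑ n ∈ S, g (j - n) * ‖u n‖^2 := h2
      _ ≤ G * ∑ n ∈ S, g (j - n) * ‖u n‖^2 := mul_le_mul_of_nonneg_right h3 h4
  set H : Freq d → ℝ := fun j => ∑ n ∈ S, g (j - n) * ‖u n‖^2 with hHdef
  have hshift : ∀ n : Freq d, Summable (fun j : Freq d => g (j - n)) := fun n =>
    (Equiv.subRight n).summable_iff.mpr hgsum
  have hHsum : Summable H :=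
    summable_sum (fun n _ => (hshift n).mul_right (‖u n‖^2))
  have hHtsum : ∑' j, H j = G * ∑ n ∈ S, ‖u n‖^2 := by
    simp only [hHdef]
    rw [Summable.tsum_finsetSum (fun n _ => (hshift n).mul_right (‖u n‖^2)), Finset.mul_sum]
    apply Finset.sum_congr rfl
    intro n _
    have e4 : ∑' j : Freq d, g (j - n) = G := (Equiv.subRight n).tsum_eq g
    rw [tsum_mul_right, e4, mul_comm]
  have hcom2sum : Summable (fun j => ‖com j‖^2) :=
    Summable.of_nonneg_of_le (fun j => sq_nonneg _) hHs (hHsum.mul_left G)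
  have hfinal : ∑' j, ‖com j‖^2 ≤ G * (G * ∑ n ∈ S, ‖u n‖^2) := by
    calc ∑' j, ‖com j‖^2 ≤ ∑' j, G * H j :=
          Summable.tsum_le_tsum hHs hcom2sum (hHsum.mul_left G)
      _ = G * ∑' j, H j := tsum_mul_left
      _ = G * (G * ∑ n ∈ S, ‖u n‖^2) := by rw [hHtsum]
  have hHcom : HsNorm 0 com = Real.sqrt (∑' j, ‖com j‖^2) := by
    rw [HsNorm]
    congr 1
    exact tsum_congr (fun j => by norm_num)
  have hHu : HsNorm 0 u = Real.sqrt (∑ n ∈ S, ‖u n‖^2) := by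
    rw [HsNorm]
    congr 1
    rw [tsum_congr (fun j : Freq d => by norm_num :
      ∀ j : Freq d, jb j ^ (2*(0:ℝ)) * ‖u j‖^2 = ‖u j‖^2)]
    exact tsum_eq_sum (fun n hn => by rw [hu0 n hn]; simp)
  have hU0 : 0 ≤ ∑ n ∈ S, ‖u n‖^2 := Finset.sum_nonneg (fun n _ => sq_nonneg _)
  have hsob0 : 0 ≤ sobNorm k s (1/2) f := Real.sqrt_nonneg _
  rw [hHcom, hHu]
  calc Real.sqrt (∑' j, ‖com j‖^2)
      ≤ Real.sqrt (G * (G * ∑ n ∈ S, ‖u n‖^2)) := Real.sqrt_le_sqrt hfinal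
    _ = G * Real.sqrt (∑ n ∈ S, ‖u n‖^2) := by
        rw [show G * (G * ∑ n ∈ S, ‖u n‖^2) = G^2 * ∑ n ∈ S, ‖u n‖^2 by ring,
          Real.sqrt_mul (sq_nonneg G), Real.sqrt_sq hG0]
    _ ≤ ((Real.sqrt A + 1) * sobNorm k s (1/2) f) * Real.sqrt (∑ n ∈ S, ‖u n‖^2) := by
        apply mul_le_mul_of_nonneg_right _ (Real.sqrt_nonneg _)
        refine hGle.trans ?_
        nlinarith [Real.sqrt_nonneg A]
    _ = (Real.sqrt A + 1) * sobNorm k s (1/2) f * Real.sqrt (∑ n ∈ S, ‖u n‖^2) := by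
        ring


end
end

section
/- Product estimate, H^{0,1/2} to L² (Lemma 5.3, bound (prod2)): Let s > (d+1)/2. There is a constant C, depending on d, s and k, such that for every f ∈ H^{s−1}(𝕋^d) and every u ∈ H^{0,1/2}(𝕋^d), the product fu lies in L²(𝕋^d) and ‖fu‖_{L²(𝕋^d)} ≤ C ‖f‖_{H^{s−1}} ‖u‖_{H^{0,1/2}}. -/
noncomputable section
open scoped BigOperators
open Filter

variable {d : ℕ}

open scoped ENNReal NNReal

/-! ### Auxiliary machinery for the product estimate -/

namespace ProdEst
open scoped ENNReal NNReal

/-- Cauchy–Schwarz for `ℝ≥0∞`-valued series. -/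
lemma tsum_sq_CS {ι : Type*} (a b : ι → ℝ≥0∞) :
    (∑' i, a i * b i) ^ 2 ≤ (∑' i, a i ^ 2) * (∑' i, b i ^ 2) := by
  letI : MeasurableSpace ι := ⊤
  haveI : MeasurableSingletonClass ι := ⟨fun _ => trivial⟩
  have hol := ENNReal.lintegral_mul_le_Lp_mul_Lq (MeasureTheory.Measure.count : MeasureTheory.Measure ι)
    (p := 2) (q := 2) ⟨by norm_num, by norm_num, by norm_num⟩
    (f := a) (g := b) (Measurable.aemeasurable fun s _ => trivial)
    (Measurable.aemeasurable fun s _ => trivial)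
  simp only [Pi.mul_apply, MeasureTheory.lintegral_count] at hol
  calc (∑' i, a i * b i) ^ 2
      ≤ ((∑' i, a i ^ (2:ℝ)) ^ (1/(2:ℝ)) * (∑' i, b i ^ (2:ℝ)) ^ (1/(2:ℝ))) ^ 2 :=
        pow_le_pow_left' hol 2
    _ = (∑' i, a i ^ 2) * (∑' i, b i ^ 2) := by
        rw [mul_pow, ← ENNReal.rpow_natCast (_ ^ (1/(2:ℝ))) 2,
          ← ENNReal.rpow_natCast (_ ^ (1/(2:ℝ))) 2, ← ENNReal.rpow_mul, ← ENNReal.rpow_mul]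
        norm_num

/-- 1D Japanese bracket. -/
def br (x : ℝ) : ℝ := Real.sqrt (1 + x ^ 2)

lemma one_le_br (x : ℝ) : 1 ≤ br x := by
  rw [show (1:ℝ) = Real.sqrt 1 by simp]
  exact Real.sqrt_le_sqrt (by nlinarith [sq_nonneg x])

lemma br_pos (x : ℝ) : 0 < br x := lt_of_lt_of_le one_pos (one_le_br x)

lemma br_nonneg (x : ℝ) : 0 ≤ br x := (br_pos x).le

lemma abs_le_br (x : ℝ) : |x| ≤ br x := by
  rw [br, ← Real.sqrt_sq_eq_abs]
  exact Real.sqrt_le_sqrt (by nlinarith)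

lemma br_neg (x : ℝ) : br (-x) = br x := by simp [br]

lemma br_le_sqrt_two_mul_max (x : ℝ) : br x ≤ Real.sqrt 2 * max 1 |x| := by
  rw [br, ← Real.sqrt_sq (by positivity : (0:ℝ) ≤ max 1 |x|), ← Real.sqrt_mul (by norm_num)]
  apply Real.sqrt_le_sqrt
  rcases le_total (|x|) 1 with h | h
  · rw [max_eq_left h]; nlinarith [sq_abs x, abs_nonneg x]
  · rw [max_eq_right h]; nlinarith [sq_abs x, abs_nonneg x]

lemma rpow_neg_mul_self {x : ℝ} (hx : 0 < x) (t : ℝ) : x ^ (-t) * x ^ t = 1 := by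
  rw [← Real.rpow_add hx]; simp

lemma sq_rpow {x : ℝ} (hx : 0 ≤ x) (t : ℝ) : (x ^ t) ^ 2 = x ^ (2 * t) := by
  rw [← Real.rpow_natCast (x ^ t) 2, ← Real.rpow_mul hx]
  norm_num [mul_comm]

/-- Summability of `br n ^ (-p)` over `ℤ` for `p > 1`. -/
lemma summable_br_int {p : ℝ} (hp : 1 < p) : Summable fun n : ℤ => br n ^ (-p) := by
  apply Summable.of_norm_bounded_eventually (g := fun n : ℤ => |(n:ℝ)| ^ (-p))
    (Real.summable_abs_int_rpow hp)
  have : ({(0:ℤ)} : Set ℤ).Finite := Set.finite_singleton 0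
  apply Filter.mem_of_superset this.compl_mem_cofinite
  intro n hn
  simp only [Set.mem_compl_iff, Set.mem_singleton_iff] at hn
  have hn' : 1 ≤ |(n:ℝ)| := by
    rw [← Int.cast_abs]; exact_mod_cast Int.one_le_abs (by exact_mod_cast hn)
  have h1 : 0 < |(n:ℝ)| := lt_of_lt_of_le one_pos hn'
  simp only [Set.mem_setOf_eq, Real.norm_eq_abs]
  rw [abs_of_nonneg (Real.rpow_nonneg (br_nonneg _) _)]
  exact Real.rpow_le_rpow_of_nonpos h1 (abs_le_br _) (by linarith)

/-- Sum over an arithmetic progression of spacing `r`, uniform in the offset `c`. -/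
lemma spaced_sum {r p : ℝ} (hr : r ≠ 0) (hp : 1 < p) :
    ∃ K : ℝ, 0 ≤ K ∧ ∀ c : ℝ,
      (∑' n : ℤ, ENNReal.ofReal (br (r * n - c) ^ (-p))) ≤ ENNReal.ofReal K := by
  have hrabs : 0 < |r| := abs_pos.mpr hr
  set c₀ : ℝ := min 1 (|r| / 2) / Real.sqrt 2 with hc₀def
  have hc₀ : 0 < c₀ := by
    apply div_pos (lt_min one_pos (by linarith)) (Real.sqrt_pos.mpr (by norm_num))
  refine ⟨c₀ ^ (-p) * ∑' n : ℤ, br n ^ (-p), ?_, ?_⟩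
  · apply mul_nonneg (Real.rpow_nonneg hc₀.le _)
    exact tsum_nonneg fun n => Real.rpow_nonneg (br_nonneg _) _
  intro c
  set q : ℤ := round (c / r) with hq
  have hre : (∑' n : ℤ, ENNReal.ofReal (br (r * n - c) ^ (-p)))
      = ∑' t : ℤ, ENNReal.ofReal (br (r * (t + q) - c) ^ (-p)) := by
    rw [← ((Equiv.addRight q).tsum_eq fun n : ℤ => ENNReal.ofReal (br (r * n - c) ^ (-p)))]
    apply tsum_congr
    intro t
    simp only [Equiv.coe_addRight]
    push_cast
    ring_nf
  rw [hre]
  have key : ∀ t : ℤ, c₀ * br t ≤ br (r * (t + q) - c) := by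
    intro t
    have h1 : c₀ * br t ≤ min 1 (|r| / 2) * max 1 |(t:ℝ)| := by
      have := br_le_sqrt_two_mul_max (t:ℝ)
      calc c₀ * br t ≤ c₀ * (Real.sqrt 2 * max 1 |(t:ℝ)|) := by
            apply mul_le_mul_of_nonneg_left this hc₀.le
        _ = min 1 (|r| / 2) * max 1 |(t:ℝ)| := by
            have hs2 : c₀ * Real.sqrt 2 = min 1 (|r| / 2) := by
              rw [hc₀def]
              field_simp
            rw [← hs2]; ring
    have h2 : min 1 (|r| / 2) * max 1 |(t:ℝ)| ≤ br (r * (t + q) - c) := by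
      rcases eq_or_ne t 0 with rfl | ht
      · simp only [Int.cast_zero, abs_zero, max_eq_left zero_le_one, mul_one]
        exact le_trans (min_le_left _ _) (one_le_br _)
      · have ht1 : (1:ℝ) ≤ |(t:ℝ)| := by
          rw [← Int.cast_abs]; exact_mod_cast Int.one_le_abs ht
        rw [max_eq_right ht1]
        have hx : |r| * (|(t:ℝ)| - 1/2) ≤ |r * (t + q) - c| := by
          have habs : |(t:ℝ) + q - c / r| ≥ |(t:ℝ)| - 1/2 := by
            have hround : |c / r - q| ≤ 1/2 := abs_sub_round (c / r)
            have h3 : |(t:ℝ)| - |c/r - q| ≤ |(t:ℝ) + q - c/r| := by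
              have := abs_sub_abs_le_abs_sub ((t:ℝ)) (c/r - q)
              have h4 : |(t:ℝ) - (c/r - q)| = |(t:ℝ) + q - c/r| := by ring_nf
              linarith [this, h4.ge, h4.le]
            linarith
          have : |r * (t + q) - c| = |r| * |(t:ℝ) + q - c / r| := by
            rw [← abs_mul]
            congr 1
            field_simp
          rw [this]
          apply mul_le_mul_of_nonneg_left habs hrabs.le
        calc min 1 (|r| / 2) * |(t:ℝ)| ≤ |r|/2 * |(t:ℝ)| := by
              apply mul_le_mul_of_nonneg_right (min_le_right _ _) (by linarith)
          _ ≤ |r| * (|(t:ℝ)| - 1/2) := by nlinarith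
          _ ≤ |r * (t + q) - c| := hx
          _ ≤ br _ := abs_le_br _
    linarith
  calc (∑' t : ℤ, ENNReal.ofReal (br (r * (t + q) - c) ^ (-p)))
      ≤ ∑' t : ℤ, ENNReal.ofReal (c₀ ^ (-p) * br t ^ (-p)) := by
        apply ENNReal.tsum_le_tsum
        intro t
        apply ENNReal.ofReal_le_ofReal
        rw [← Real.mul_rpow hc₀.le (br_nonneg _)]
        exact Real.rpow_le_rpow_of_nonpos (mul_pos hc₀ (br_pos _)) (key t) (by linarith)
    _ = ENNReal.ofReal (c₀ ^ (-p) * ∑' n : ℤ, br n ^ (-p)) := by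
        rw [← tsum_mul_left,
          ENNReal.ofReal_tsum_of_nonneg
            (fun n => mul_nonneg (Real.rpow_nonneg hc₀.le _) (Real.rpow_nonneg (br_nonneg _) _))
            ((summable_br_int hp).mul_left _)]

/-- Pointwise splitting inequality. -/
lemma pointwise_split {ε : ℝ} (hε : 0 < ε) (a x : ℝ) :
    br a ^ (-ε) * br x ^ (-(1:ℝ)) ≤ br a ^ (-(2:ℝ)) + br x ^ (-(1 + ε/2)) := by
  rcases le_total (br x ^ ((1:ℝ)/2)) (br a) with h | h
  · have h1 : br a ^ (-ε) ≤ br x ^ (-(ε/2)) := by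
      have := Real.rpow_le_rpow_of_nonpos (x := br x ^ ((1:ℝ)/2)) (y := br a)
        (Real.rpow_pos_of_pos (br_pos x) _) h (by linarith : -ε ≤ 0)
      rwa [← Real.rpow_mul (br_nonneg x), show (1:ℝ)/2 * -ε = -(ε/2) by ring] at this
    have h2 : br a ^ (-ε) * br x ^ (-(1:ℝ)) ≤ br x ^ (-(ε/2)) * br x ^ (-(1:ℝ)) :=
      mul_le_mul_of_nonneg_right h1 (Real.rpow_nonneg (br_nonneg _) _)
    have h3 : br x ^ (-(ε/2)) * br x ^ (-(1:ℝ)) = br x ^ (-(1 + ε/2)) := by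
      rw [← Real.rpow_add (br_pos x)]; ring_nf
    have h4 : (0:ℝ) ≤ br a ^ (-(2:ℝ)) := Real.rpow_nonneg (br_nonneg _) _
    linarith [h2, h3.le, h3.ge]
  · have h1 : br x ^ (-(1:ℝ)) ≤ br a ^ (-(2:ℝ)) := by
      have := Real.rpow_le_rpow_of_nonpos (x := br a) (y := br x ^ ((1:ℝ)/2))
        (br_pos a) h (by norm_num : (-2:ℝ) ≤ 0)
      rwa [← Real.rpow_mul (br_nonneg x), show (1:ℝ)/2 * (-2) = -1 by ring] at this
    have h2 : br a ^ (-ε) ≤ 1 :=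
      Real.rpow_le_one_of_one_le_of_nonpos (one_le_br a) (by linarith)
    have h5 : (0:ℝ) ≤ br x ^ (-(1 + ε/2)) := Real.rpow_nonneg (br_nonneg _) _
    nlinarith [Real.rpow_nonneg (br_nonneg x) (-(1:ℝ)), Real.rpow_nonneg (br_nonneg a) (-ε)]

/-- 1D key lemma: uniform bound on the weighted sum. -/
lemma oneD_key {r ε : ℝ} (hr : r ≠ 0) (hε : 0 < ε) (hε1 : ε ≤ 1) :
    ∃ K : ℝ, 0 ≤ K ∧ ∀ c : ℝ,
      (∑' n : ℤ, ENNReal.ofReal (br n ^ (-ε) * br (r * n - c) ^ (-(1:ℝ)))) ≤ ENNReal.ofReal K := by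
  obtain ⟨Kb, hKb0, hKb⟩ := spaced_sum hr (p := 1 + ε/2) (by linarith)
  set Ka : ℝ := ∑' n : ℤ, br n ^ (-(2:ℝ)) with hKa
  have hKa0 : 0 ≤ Ka := tsum_nonneg fun n => Real.rpow_nonneg (br_nonneg _) _
  refine ⟨Ka + Kb, by linarith, fun c => ?_⟩
  calc (∑' n : ℤ, ENNReal.ofReal (br n ^ (-ε) * br (r * n - c) ^ (-(1:ℝ))))
      ≤ ∑' n : ℤ, (ENNReal.ofReal (br n ^ (-(2:ℝ)))
          + ENNReal.ofReal (br (r * n - c) ^ (-(1 + ε/2)))) := by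
        apply ENNReal.tsum_le_tsum
        intro n
        rw [← ENNReal.ofReal_add (Real.rpow_nonneg (br_nonneg _) _)
          (Real.rpow_nonneg (br_nonneg _) _)]
        exact ENNReal.ofReal_le_ofReal (pointwise_split hε _ _)
    _ = (∑' n : ℤ, ENNReal.ofReal (br n ^ (-(2:ℝ))))
        + ∑' n : ℤ, ENNReal.ofReal (br (r * n - c) ^ (-(1 + ε/2))) := ENNReal.tsum_add
    _ ≤ ENNReal.ofReal Ka + ENNReal.ofReal Kb := by
        gcongr
        · rw [hKa, ENNReal.ofReal_tsum_of_nonneg (fun n => Real.rpow_nonneg (br_nonneg _) _)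
            (summable_br_int one_lt_two)]
        · exact hKb c
    _ = ENNReal.ofReal (Ka + Kb) := (ENNReal.ofReal_add hKa0 hKb0).symm

/-- Multi-dimensional Japanese bracket. -/
def jbF {ι : Type*} [Fintype ι] (m : ι → ℤ) : ℝ := Real.sqrt (1 + ∑ i, ((m i : ℝ)) ^ 2)

lemma one_le_jbF {ι : Type*} [Fintype ι] (m : ι → ℤ) : 1 ≤ jbF m := by
  rw [show (1:ℝ) = Real.sqrt 1 by simp]
  apply Real.sqrt_le_sqrt
  have : (0:ℝ) ≤ ∑ i, ((m i : ℝ)) ^ 2 := by positivity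
  linarith

lemma jbF_pos {ι : Type*} [Fintype ι] (m : ι → ℤ) : 0 < jbF m :=
  lt_of_lt_of_le one_pos (one_le_jbF m)

lemma finite_1d_sum {p : ℝ} (hp : 1 < p) :
    (∑' n : ℤ, ENNReal.ofReal (br n ^ (-p))) < ⊤ := by
  rw [← ENNReal.ofReal_tsum_of_nonneg (fun n => Real.rpow_nonneg (br_nonneg _) _)
    (summable_br_int hp)]
  exact ENNReal.ofReal_lt_top

/-- Finiteness of the lattice sum over `Fin D → ℤ`. -/
lemma lattice_sum_fin : ∀ (D : ℕ) {β : ℝ}, (D : ℝ) < β →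
    (∑' m : Fin D → ℤ, ENNReal.ofReal (jbF m ^ (-β))) < ⊤ := by
  intro D
  induction D with
  | zero =>
    intro β hβ
    have : (∑' m : Fin 0 → ℤ, ENNReal.ofReal (jbF m ^ (-β)))
        = ENNReal.ofReal (jbF (fun i : Fin 0 => (0:ℤ)) ^ (-β)) := by
      apply tsum_eq_single
      intro b' hb'
      exact absurd (funext fun i => absurd i.2 (by omega)) hb'
    rw [this]; exact ENNReal.ofReal_lt_top
  | succ D ih =>
    intro β hβ
    push_cast at hβ
    have hD1 : (0:ℝ) < (D:ℝ) + 1 := by positivity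
    set t : ℝ := (β - D - 1) / 2 with ht
    have ht0 : 0 < t := by rw [ht]; linarith
    set β₁ : ℝ := 1 + t with hβ₁
    set β₂ : ℝ := (D:ℝ) + t with hβ₂
    have hβ₁1 : 1 < β₁ := by rw [hβ₁]; linarith
    have hβ₂D : (D:ℝ) < β₂ := by rw [hβ₂]; linarith
    have hsplit : β = β₁ + β₂ := by rw [hβ₁, hβ₂, ht]; ring
    set e := (Fin.consEquiv fun _ : Fin (D+1) => ℤ).symm with he
    calc (∑' m : Fin (D+1) → ℤ, ENNReal.ofReal (jbF m ^ (-β)))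
        = ∑' p : ℤ × (Fin D → ℤ), ENNReal.ofReal (jbF (e.symm p) ^ (-β)) :=
          (e.symm.tsum_eq fun m => ENNReal.ofReal (jbF m ^ (-β))).symm
      _ = ∑' x : ℤ, ∑' y : Fin D → ℤ, ENNReal.ofReal (jbF (e.symm (x, y)) ^ (-β)) :=
          ENNReal.tsum_prod'
      _ ≤ ∑' x : ℤ, ∑' y : Fin D → ℤ,
            ENNReal.ofReal (br x ^ (-β₁)) * ENNReal.ofReal (jbF y ^ (-β₂)) := by
          apply ENNReal.tsum_le_tsum; intro x
          apply ENNReal.tsum_le_tsum; intro y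
          rw [← ENNReal.ofReal_mul (Real.rpow_nonneg (br_nonneg _) _)]
          apply ENNReal.ofReal_le_ofReal
          have hc : jbF (e.symm (x, y)) = Real.sqrt (1 + ((x:ℝ)^2 + ∑ i, ((y i:ℝ))^2)) := by
            rw [jbF]
            congr 1
            rw [Fin.sum_univ_succ]
            simp [he, Fin.cons_zero, Fin.cons_succ]
          have h1 : br x ≤ jbF (e.symm (x, y)) := by
            rw [hc, br]
            apply Real.sqrt_le_sqrt
            have : (0:ℝ) ≤ ∑ i, ((y i:ℝ))^2 := by positivity
            linarith
          have h2 : jbF y ≤ jbF (e.symm (x, y)) := by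
            rw [hc, jbF]
            apply Real.sqrt_le_sqrt
            have : (0:ℝ) ≤ (x:ℝ)^2 := by positivity
            linarith
          calc jbF (e.symm (x, y)) ^ (-β)
              = jbF (e.symm (x, y)) ^ (-β₁) * jbF (e.symm (x, y)) ^ (-β₂) := by
                rw [← Real.rpow_add (jbF_pos _), hsplit]; ring_nf
            _ ≤ br x ^ (-β₁) * jbF y ^ (-β₂) := by
                apply mul_le_mul
                · exact Real.rpow_le_rpow_of_nonpos (br_pos _) h1 (by linarith)
                · exact Real.rpow_le_rpow_of_nonpos (jbF_pos _) h2
                    (by nlinarith [Nat.cast_nonneg (α := ℝ) D])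
                · exact Real.rpow_nonneg (Real.sqrt_nonneg _) _
                · exact Real.rpow_nonneg (br_nonneg _) _
      _ = (∑' x : ℤ, ENNReal.ofReal (br x ^ (-β₁)))
            * ∑' y : Fin D → ℤ, ENNReal.ofReal (jbF y ^ (-β₂)) := by
          rw [← ENNReal.tsum_mul_right]
          congr 1
          ext x
          rw [ENNReal.tsum_mul_left]
      _ < ⊤ := ENNReal.mul_lt_top (finite_1d_sum hβ₁1) (ih hβ₂D)

/-- Finiteness of the lattice sum over `ι → ℤ` for a general fintype. -/
lemma lattice_sum_general {ι : Type*} [Fintype ι] {β : ℝ}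
    (hβ : (Fintype.card ι : ℝ) < β) :
    (∑' m : ι → ℤ, ENNReal.ofReal (jbF m ^ (-β))) < ⊤ := by
  set D := Fintype.card ι with hD
  set e := Fintype.equivFin ι with he
  set E := Equiv.arrowCongr e (Equiv.refl ℤ) with hE
  have key : ∀ m' : Fin D → ℤ, jbF (E.symm m') = jbF m' := by
    intro m'
    rw [jbF, jbF]
    congr 1
    congr 1
    rw [← Equiv.sum_comp e (fun j => ((m' j : ℝ)) ^ 2)]
    apply Finset.sum_congr rfl
    intro i _
    rfl
  calc (∑' m : ι → ℤ, ENNReal.ofReal (jbF m ^ (-β)))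
      = ∑' m' : Fin D → ℤ, ENNReal.ofReal (jbF (E.symm m') ^ (-β)) :=
        (E.symm.tsum_eq fun m => ENNReal.ofReal (jbF m ^ (-β))).symm
    _ = ∑' m' : Fin D → ℤ, ENNReal.ofReal (jbF m' ^ (-β)) :=
        tsum_congr fun m' => by rw [key m']
    _ < ⊤ := lattice_sum_fin D hβ

lemma sum_split {M : Type*} [AddCommMonoid M] {d : ℕ} (i₀ : Fin d) (g : Fin d → M) :
    ∑ i, g i = g i₀ + ∑ j : {j : Fin d // j ≠ i₀}, g j := by
  rw [← Finset.add_sum_erase Finset.univ g (Finset.mem_univ i₀)]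
  congr 1
  exact Finset.sum_subtype _ (fun x => by simp [Finset.mem_erase]) g

/-- Key kernel bound: the convolution kernel sum, uniform in the shift `c`. -/
lemma kernel_bound {d : ℕ} (hd : 1 ≤ d) (k : Fin d → ℝ) {i₀ : Fin d} (hk0 : k i₀ ≠ 0)
    {σ : ℝ} (hσ : (d:ℝ) - 1 < σ) :
    ∃ K : ℝ, 0 ≤ K ∧ ∀ c : ℝ,
      (∑' m : Fin d → ℤ,
        ENNReal.ofReal (jbF m ^ (-σ) * br ((∑ i, (m i : ℝ) * k i) - c) ^ (-(1:ℝ))))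
        ≤ ENNReal.ofReal K := by
  set ε : ℝ := min ((σ - ((d:ℝ) - 1)) / 2) 1 with hεdef
  have hε0 : 0 < ε := lt_min (by linarith) one_pos
  have hε1 : ε ≤ 1 := min_le_right _ _
  have hεle : ε ≤ (σ - ((d:ℝ) - 1)) / 2 := min_le_left _ _
  set β : ℝ := σ - ε with hβdef
  have hβ : (d:ℝ) - 1 < β := by rw [hβdef]; linarith
  have hcard : (Fintype.card {j : Fin d // j ≠ i₀} : ℝ) = (d:ℝ) - 1 := by
    have h1 : Fintype.card {j : Fin d // j ≠ i₀} = d - 1 := by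
      rw [Fintype.card_subtype_compl, Fintype.card_subtype_eq, Fintype.card_fin]
    rw [h1, Nat.cast_sub hd, Nat.cast_one]
  obtain ⟨K₁, hK₁0, hK₁⟩ := oneD_key hk0 hε0 hε1
  have hS₂ : (∑' m' : {j : Fin d // j ≠ i₀} → ℤ, ENNReal.ofReal (jbF m' ^ (-β))) < ⊤ :=
    lattice_sum_general (by rw [hcard]; exact hβ)
  set S₂ := ∑' m' : {j : Fin d // j ≠ i₀} → ℤ, ENNReal.ofReal (jbF m' ^ (-β)) with hS₂def
  refine ⟨S₂.toReal * K₁, mul_nonneg ENNReal.toReal_nonneg hK₁0, fun c => ?_⟩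
  set E := Equiv.funSplitAt i₀ ℤ with hE
  have hcomp1 : ∀ p : ℤ × ({j : Fin d // j ≠ i₀} → ℤ), (E.symm p) i₀ = p.1 := by
    intro p
    simp [hE, Equiv.funSplitAt_symm_apply]
  have hcomp2 : ∀ (p : ℤ × ({j : Fin d // j ≠ i₀} → ℤ)) (j : {j : Fin d // j ≠ i₀}),
      (E.symm p) j = p.2 j := by
    intro p j
    simp [hE, Equiv.funSplitAt_symm_apply, dif_neg j.prop]
  have hsum : ∀ p : ℤ × ({j : Fin d // j ≠ i₀} → ℤ),
      (∑ i, (((E.symm p) i : ℝ)) ^ 2)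
        = (p.1:ℝ)^2 + ∑ j : {j : Fin d // j ≠ i₀}, ((p.2 j : ℝ))^2 := by
    intro p
    rw [sum_split i₀ (fun i => (((E.symm p) i : ℝ)) ^ 2), hcomp1]
    congr 1
    exact Finset.sum_congr rfl fun j _ => by rw [hcomp2]
  have hdot : ∀ p : ℤ × ({j : Fin d // j ≠ i₀} → ℤ),
      (∑ i, ((E.symm p) i : ℝ) * k i)
        = (p.1:ℝ) * k i₀ + ∑ j : {j : Fin d // j ≠ i₀}, ((p.2 j : ℝ)) * k j := by
    intro p
    rw [sum_split i₀ (fun i => ((E.symm p) i : ℝ) * k i), hcomp1]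
    congr 1
    exact Finset.sum_congr rfl fun j _ => by rw [hcomp2]
  calc (∑' m : Fin d → ℤ,
        ENNReal.ofReal (jbF m ^ (-σ) * br ((∑ i, (m i : ℝ) * k i) - c) ^ (-(1:ℝ))))
      = ∑' p : ℤ × ({j : Fin d // j ≠ i₀} → ℤ),
          ENNReal.ofReal (jbF (E.symm p) ^ (-σ)
            * br ((∑ i, ((E.symm p) i : ℝ) * k i) - c) ^ (-(1:ℝ))) :=
        (E.symm.tsum_eq fun m => ENNReal.ofReal
          (jbF m ^ (-σ) * br ((∑ i, (m i : ℝ) * k i) - c) ^ (-(1:ℝ)))).symm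
    _ = ∑' n : ℤ, ∑' m' : {j : Fin d // j ≠ i₀} → ℤ,
          ENNReal.ofReal (jbF (E.symm (n, m')) ^ (-σ)
            * br ((∑ i, ((E.symm (n, m')) i : ℝ) * k i) - c) ^ (-(1:ℝ))) :=
        ENNReal.tsum_prod'
    _ = ∑' m' : {j : Fin d // j ≠ i₀} → ℤ, ∑' n : ℤ,
          ENNReal.ofReal (jbF (E.symm (n, m')) ^ (-σ)
            * br ((∑ i, ((E.symm (n, m')) i : ℝ) * k i) - c) ^ (-(1:ℝ))) :=
        ENNReal.tsum_comm
    _ ≤ ∑' m' : {j : Fin d // j ≠ i₀} → ℤ, ∑' n : ℤ,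
          ENNReal.ofReal (jbF m' ^ (-β))
            * ENNReal.ofReal (br n ^ (-ε)
              * br (k i₀ * n - (c - ∑ j : {j : Fin d // j ≠ i₀}, ((m' j : ℝ)) * k j)) ^ (-(1:ℝ))) := by
        apply ENNReal.tsum_le_tsum; intro m'
        apply ENNReal.tsum_le_tsum; intro n
        rw [← ENNReal.ofReal_mul (Real.rpow_nonneg (jbF_pos m').le _)]
        apply ENNReal.ofReal_le_ofReal
        have harg : (∑ i, ((E.symm (n, m')) i : ℝ) * k i) - c
            = k i₀ * n - (c - ∑ j : {j : Fin d // j ≠ i₀}, ((m' j : ℝ)) * k j) := by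
          rw [hdot (n, m')]; ring
        rw [harg]
        have h1 : br n ≤ jbF (E.symm (n, m')) := by
          rw [br, jbF, hsum (n, m')]
          apply Real.sqrt_le_sqrt
          have : (0:ℝ) ≤ ∑ j : {j : Fin d // j ≠ i₀}, ((m' j : ℝ))^2 := by positivity
          linarith
        have h2 : jbF m' ≤ jbF (E.symm (n, m')) := by
          rw [jbF, jbF, hsum (n, m')]
          apply Real.sqrt_le_sqrt
          have : (0:ℝ) ≤ ((n:ℝ))^2 := by positivity
          linarith
        have key : jbF (E.symm (n, m')) ^ (-σ) ≤ jbF m' ^ (-β) * br n ^ (-ε) := by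
          have hsplit : jbF (E.symm (n, m')) ^ (-σ)
              = jbF (E.symm (n, m')) ^ (-β) * jbF (E.symm (n, m')) ^ (-ε) := by
            rw [← Real.rpow_add (jbF_pos _), hβdef]; ring_nf
          rw [hsplit]
          apply mul_le_mul
          · exact Real.rpow_le_rpow_of_nonpos (jbF_pos _) h2 (by linarith)
          · exact Real.rpow_le_rpow_of_nonpos (br_pos _) h1 (by linarith)
          · exact Real.rpow_nonneg (Real.sqrt_nonneg _) _
          · exact Real.rpow_nonneg (Real.sqrt_nonneg _) _
        calc jbF (E.symm (n, m')) ^ (-σ) * br (k i₀ * n - _) ^ (-(1:ℝ))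
            ≤ (jbF m' ^ (-β) * br n ^ (-ε)) * br (k i₀ * n - _) ^ (-(1:ℝ)) :=
              mul_le_mul_of_nonneg_right key (Real.rpow_nonneg (br_nonneg _) _)
          _ = jbF m' ^ (-β) * (br n ^ (-ε) * br (k i₀ * n - _) ^ (-(1:ℝ))) := by ring
    _ = ∑' m' : {j : Fin d // j ≠ i₀} → ℤ,
          ENNReal.ofReal (jbF m' ^ (-β))
            * ∑' n : ℤ, ENNReal.ofReal (br n ^ (-ε)
              * br (k i₀ * n - (c - ∑ j : {j : Fin d // j ≠ i₀}, ((m' j : ℝ)) * k j)) ^ (-(1:ℝ))) :=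
        tsum_congr fun m' => ENNReal.tsum_mul_left
    _ ≤ ∑' m' : {j : Fin d // j ≠ i₀} → ℤ,
          ENNReal.ofReal (jbF m' ^ (-β)) * ENNReal.ofReal K₁ := by
        apply ENNReal.tsum_le_tsum; intro m'
        exact mul_le_mul_right (hK₁ _) _
    _ = S₂ * ENNReal.ofReal K₁ := by rw [ENNReal.tsum_mul_right]
    _ ≤ ENNReal.ofReal (S₂.toReal * K₁) := by
        rw [ENNReal.ofReal_mul ENNReal.toReal_nonneg, ENNReal.ofReal_toReal hS₂.ne]

end ProdEst

open ProdEst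


/-- **Lemma 5.3, bound (prod2) (Product estimate, `H^{0,1/2} → L²`).** Let
`s > (d+1)/2`. There is a constant `C = C(d,s,k)` such that for every
`f ∈ H^{s-1}(𝕋^d)` and every `u ∈ H^{0,1/2}(𝕋^d)`, the product `fu` lies in `L²(𝕋^d)`
and `‖fu‖_{L²} ≤ C ‖f‖_{H^{s-1}} ‖u‖_{H^{0,1/2}}`. -/
theorem product_H012_L2
    (d : ℕ) (hd : 1 ≤ d) (k : Fin d → ℝ) (hk : Indep k)
    (s : ℝ) (hs : ((d : ℝ) + 1) / 2 < s) :
    ∃ C : ℝ, 0 < C ∧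
      ∀ f u : Coeffs d, MemHs (s - 1) f → MemSob k 0 (1/2) u →
        MemHs 0 (cmul f u) ∧
        HsNorm 0 (cmul f u) ≤ C * HsNorm (s - 1) f * sobNorm k 0 (1/2) u := by
  classical
  -- the first entry of `k` is nonzero
  obtain ⟨i₀, hi₀⟩ : ∃ i₀ : Fin d, k i₀ ≠ 0 := by
    refine ⟨⟨0, hd⟩, fun h0 => ?_⟩
    set j : Freq d := fun i => if i = (⟨0, hd⟩ : Fin d) then 1 else 0 with hjd
    have hdot : dotk k j = 0 := by
      rw [dotk, Finset.sum_eq_single (⟨0, hd⟩ : Fin d)]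
      · simp [hjd, h0]
      · intro b _ hb; simp [hjd, hb]
      · simp
    have hz := hk j hdot
    have h1 : j ⟨0, hd⟩ = 0 := by rw [hz]; rfl
    simp [hjd] at h1
  have hσ : (d:ℝ) - 1 < 2 * (s - 1) := by linarith
  obtain ⟨K, hK0, hKb⟩ := ProdEst.kernel_bound hd k hi₀ hσ
  refine ⟨Real.sqrt K + 1, by positivity, ?_⟩
  intro f u hf hu
  have hjb : ∀ m : Freq d, jb m = jbF m := fun _ => rfl
  have hjb_pos : ∀ m : Freq d, 0 < jb m := fun m => (hjb m) ▸ jbF_pos m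
  have hdot_sub : ∀ j m : Freq d, dotk k (j - m) = dotk k j - dotk k m := by
    intro j m
    simp only [dotk, Pi.sub_apply, Int.cast_sub, sub_mul]
    rw [Finset.sum_sub_distrib]
  have hwte : ∀ n : Freq d, wt k 0 (1/2) n = br (dotk k n) := by
    intro n
    rw [wt, mul_zero, Real.rpow_zero, one_mul, br, Real.sqrt_eq_rpow]
  have hu' : Summable (fun n : Freq d => br (dotk k n) * ‖u n‖ ^ 2) :=
    hu.congr fun n => by rw [hwte n]
  have hfterm : ∀ m : Freq d, (0:ℝ) ≤ jb m ^ (2*(s-1)) * ‖f m‖ ^ 2 := fun m =>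
    mul_nonneg (Real.rpow_nonneg (hjb_pos m).le _) (sq_nonneg _)
  have huterm : ∀ n : Freq d, (0:ℝ) ≤ br (dotk k n) * ‖u n‖ ^ 2 := fun n =>
    mul_nonneg (br_nonneg _) (sq_nonneg _)
  set Af : ℝ := ∑' m : Freq d, jb m ^ (2*(s-1)) * ‖f m‖ ^ 2 with hAfdef
  set Bu : ℝ := ∑' n : Freq d, br (dotk k n) * ‖u n‖ ^ 2 with hBudef
  have hAf0 : 0 ≤ Af := tsum_nonneg hfterm
  have hBu0 : 0 ≤ Bu := tsum_nonneg huterm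
  set A : ℝ≥0∞ := ENNReal.ofReal Af with hAdef
  set B : ℝ≥0∞ := ENNReal.ofReal Bu with hBdef
  set Φ : Freq d → ℝ≥0∞ := fun m => ENNReal.ofReal (jb m ^ (2*(s-1)) * ‖f m‖ ^ 2) with hΦdef
  set Ψ : Freq d → ℝ≥0∞ := fun n => ENNReal.ofReal (br (dotk k n) * ‖u n‖ ^ 2) with hΨdef
  have hAsum : ∑' m, Φ m = A := by
    rw [hAdef, hAfdef, ENNReal.ofReal_tsum_of_nonneg hfterm hf]
  have hBsum : ∑' n, Ψ n = B := by
    rw [hBdef, hBudef, ENNReal.ofReal_tsum_of_nonneg huterm hu']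
  set a : Freq d → Freq d → ℝ≥0∞ := fun j m =>
    ENNReal.ofReal (jb m ^ (-(s-1)) * br (dotk k (j - m)) ^ (-(1/2):ℝ)) with hadef
  set b : Freq d → Freq d → ℝ≥0∞ := fun j m =>
    ENNReal.ofReal (jb m ^ (s-1) * br (dotk k (j - m)) ^ ((1/2):ℝ)
      * (‖f m‖ * ‖u (j - m)‖)) with hbdef
  set P : Freq d → ℝ≥0∞ := fun j => ∑' m, ENNReal.ofReal (‖f m‖ * ‖u (j - m)‖) with hPdef
  set T : Freq d → ℝ≥0∞ := fun j => ∑' m, Φ m * Ψ (j - m) with hTdef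
  have hab : ∀ j m : Freq d, a j m * b j m = ENNReal.ofReal (‖f m‖ * ‖u (j - m)‖) := by
    intro j m
    rw [hadef, hbdef]
    dsimp only
    rw [← ENNReal.ofReal_mul (mul_nonneg (Real.rpow_nonneg (hjb_pos m).le _)
      (Real.rpow_nonneg (br_nonneg _) _))]
    congr 1
    have h1 : jb m ^ (-(s-1)) * jb m ^ (s-1) = 1 := rpow_neg_mul_self (hjb_pos m) _
    have h2 : br (dotk k (j - m)) ^ (-(1/2):ℝ) * br (dotk k (j - m)) ^ ((1/2):ℝ) = 1 :=
      rpow_neg_mul_self (br_pos _) _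
    calc jb m ^ (-(s-1)) * br (dotk k (j - m)) ^ (-(1/2):ℝ)
          * (jb m ^ (s-1) * br (dotk k (j - m)) ^ ((1/2):ℝ) * (‖f m‖ * ‖u (j - m)‖))
        = (jb m ^ (-(s-1)) * jb m ^ (s-1))
            * ((br (dotk k (j - m)) ^ (-(1/2):ℝ) * br (dotk k (j - m)) ^ ((1/2):ℝ))
              * (‖f m‖ * ‖u (j - m)‖)) := by ring
      _ = ‖f m‖ * ‖u (j - m)‖ := by rw [h1, h2]; ring
  have ha2 : ∀ j m : Freq d, (a j m) ^ 2
      = ENNReal.ofReal (jb m ^ (-(2*(s-1))) * br (dotk k (j - m)) ^ (-(1:ℝ))) := by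
    intro j m
    rw [hadef]
    dsimp only
    rw [← ENNReal.ofReal_pow (mul_nonneg (Real.rpow_nonneg (hjb_pos m).le _)
      (Real.rpow_nonneg (br_nonneg _) _))]
    congr 1
    rw [mul_pow, sq_rpow (hjb_pos m).le, sq_rpow (br_nonneg _),
      show 2 * -(s-1) = -(2*(s-1)) by ring, show (2:ℝ) * (-(1/2):ℝ) = -1 by norm_num]
  have hb2 : ∀ j m : Freq d, (b j m) ^ 2 = Φ m * Ψ (j - m) := by
    intro j m
    rw [hbdef, hΦdef, hΨdef]
    dsimp only
    rw [← ENNReal.ofReal_pow (mul_nonneg (mul_nonneg (Real.rpow_nonneg (hjb_pos m).le _)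
      (Real.rpow_nonneg (br_nonneg _) _)) (mul_nonneg (norm_nonneg _) (norm_nonneg _))),
      ← ENNReal.ofReal_mul (hfterm m)]
    congr 1
    rw [mul_pow, mul_pow, sq_rpow (hjb_pos m).le, sq_rpow (br_nonneg _),
      show (2:ℝ) * ((1/2):ℝ) = 1 by norm_num, Real.rpow_one, mul_pow]
    ring
  have hS : ∀ j : Freq d, (∑' m, (a j m) ^ 2) ≤ ENNReal.ofReal K := by
    intro j
    have heq : (∑' m, (a j m) ^ 2)
        = ∑' m : Freq d, ENNReal.ofReal (jbF m ^ (-(2*(s-1)))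
            * br ((∑ i, (m i : ℝ) * k i) - dotk k j) ^ (-(1:ℝ))) := by
      apply tsum_congr
      intro m
      rw [ha2 j m]
      have hbr : br (dotk k (j - m)) = br ((∑ i, (m i : ℝ) * k i) - dotk k j) := by
        rw [hdot_sub j m, show dotk k j - dotk k m = -(dotk k m - dotk k j) by ring, br_neg]
        rfl
      rw [hbr, hjb m]
    rw [heq]
    exact hKb (dotk k j)
  have hkey : ∀ j : Freq d, P j ^ 2 ≤ ENNReal.ofReal K * T j := by
    intro j
    have h1 : P j = ∑' m, a j m * b j m := tsum_congr fun m => (hab j m).symm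
    calc P j ^ 2 = (∑' m, a j m * b j m) ^ 2 := by rw [h1]
      _ ≤ (∑' m, (a j m) ^ 2) * (∑' m, (b j m) ^ 2) := tsum_sq_CS _ _
      _ ≤ ENNReal.ofReal K * T j := by
          apply mul_le_mul' (hS j)
          exact le_of_eq (tsum_congr fun m => hb2 j m)
  have hTsum : ∑' j, T j = A * B := by
    rw [hTdef]
    calc (∑' j : Freq d, ∑' m : Freq d, Φ m * Ψ (j - m))
        = ∑' m : Freq d, ∑' j : Freq d, Φ m * Ψ (j - m) := ENNReal.tsum_comm
      _ = ∑' m : Freq d, Φ m * ∑' j : Freq d, Ψ (j - m) :=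
          tsum_congr fun m => ENNReal.tsum_mul_left
      _ = ∑' m : Freq d, Φ m * B := by
          apply tsum_congr; intro m
          congr 1
          rw [← hBsum]
          exact (Equiv.subRight m).tsum_eq Ψ
      _ = A * B := by rw [ENNReal.tsum_mul_right, hAsum]
  have hABne : A * B ≠ ⊤ := ENNReal.mul_ne_top ENNReal.ofReal_ne_top ENNReal.ofReal_ne_top
  have hTj : ∀ j, T j ≤ A * B := fun j => hTsum ▸ ENNReal.le_tsum j
  have hKTne : ∀ j, ENNReal.ofReal K * T j ≠ ⊤ := fun j =>
    ENNReal.mul_ne_top ENNReal.ofReal_ne_top (ne_top_of_le_ne_top hABne (hTj j))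
  have hPfin : ∀ j, P j ≠ ⊤ := by
    intro j hPtop
    have h1 : P j ^ 2 = ⊤ := by rw [hPtop]; exact ENNReal.top_pow (by norm_num)
    exact (hKTne j) (top_le_iff.mp (h1 ▸ hkey j))
  have hcoe : ∀ j m : Freq d, (‖f m * u (j - m)‖₊ : ℝ≥0∞)
      = ENNReal.ofReal (‖f m‖ * ‖u (j - m)‖) := by
    intro j m
    rw [← norm_mul, ofReal_norm, enorm_eq_nnnorm]
  have hPcoe : ∀ j : Freq d, P j = ∑' m, (‖f m * u (j - m)‖₊ : ℝ≥0∞) := by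
    intro j
    rw [hPdef]
    exact tsum_congr fun m => (hcoe j m).symm
  have hnnsum : ∀ j : Freq d, Summable (fun m => ‖f m * u (j - m)‖₊) := by
    intro j
    apply ENNReal.tsum_coe_ne_top_iff_summable.mp
    rw [← hPcoe j]
    exact hPfin j
  have hnormle : ∀ j : Freq d, (‖cmul f u j‖₊ : ℝ≥0∞) ≤ P j := by
    intro j
    have hc : cmul f u j = ∑' m, f m * u (j - m) := rfl
    calc (‖cmul f u j‖₊ : ℝ≥0∞)
        ≤ ((∑' m, ‖f m * u (j - m)‖₊ : ℝ≥0) : ℝ≥0∞) := by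
          rw [hc]
          exact ENNReal.coe_le_coe.mpr (nnnorm_tsum_le (hnnsum j))
      _ = ∑' m, (‖f m * u (j - m)‖₊ : ℝ≥0∞) := ENNReal.coe_tsum (hnnsum j)
      _ = P j := (hPcoe j).symm
  set Q : ℝ≥0∞ := ∑' j : Freq d, (‖cmul f u j‖₊ : ℝ≥0∞) ^ 2 with hQdef
  have hQle : Q ≤ ENNReal.ofReal K * (A * B) := by
    rw [hQdef]
    calc (∑' j : Freq d, (‖cmul f u j‖₊ : ℝ≥0∞) ^ 2)
        ≤ ∑' j : Freq d, ENNReal.ofReal K * T j :=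
          ENNReal.tsum_le_tsum fun j =>
            le_trans (pow_le_pow_left' (hnormle j) 2) (hkey j)
      _ = ENNReal.ofReal K * ∑' j, T j := ENNReal.tsum_mul_left
      _ = ENNReal.ofReal K * (A * B) := by rw [hTsum]
  have hQne : Q ≠ ⊤ := ne_top_of_le_ne_top
    (ENNReal.mul_ne_top ENNReal.ofReal_ne_top hABne) hQle
  have hmem : MemHs 0 (cmul f u) := by
    rw [MemHs]
    have h1 : Summable fun j : Freq d => ((‖cmul f u j‖₊ ^ 2 : ℝ≥0) : ℝ) := by
      apply NNReal.summable_coe.mpr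
      apply ENNReal.tsum_coe_ne_top_iff_summable.mp
      have : (∑' j : Freq d, ((‖cmul f u j‖₊ ^ 2 : ℝ≥0) : ℝ≥0∞)) = Q := by
        rw [hQdef]
        exact tsum_congr fun j => by rw [ENNReal.coe_pow]
      rw [this]
      exact hQne
    refine h1.congr fun j => ?_
    rw [mul_zero, Real.rpow_zero, one_mul]
    push_cast
    rfl
  refine ⟨hmem, ?_⟩
  have hRQ : (∑' j : Freq d, jb j ^ (2*(0:ℝ)) * ‖cmul f u j‖ ^ 2) = Q.toReal := by
    rw [hQdef, ENNReal.tsum_toReal_eq (fun j => by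
      rw [← ENNReal.coe_pow]; exact ENNReal.coe_ne_top)]
    apply tsum_congr; intro j
    rw [mul_zero, Real.rpow_zero, one_mul, ← ENNReal.coe_pow, ENNReal.coe_toReal]
    push_cast
    rfl
  have hQR : Q.toReal ≤ K * Af * Bu := by
    have h1 := ENNReal.toReal_mono (ENNReal.mul_ne_top ENNReal.ofReal_ne_top hABne) hQle
    rwa [ENNReal.toReal_mul, ENNReal.toReal_mul, ENNReal.toReal_ofReal hK0,
      hAdef, hBdef, ENNReal.toReal_ofReal hAf0, ENNReal.toReal_ofReal hBu0,
      ← mul_assoc] at h1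
  have hHsf : HsNorm (s - 1) f = Real.sqrt Af := by rw [HsNorm, hAfdef]
  have hsob : sobNorm k 0 (1/2) u = Real.sqrt Bu := by
    rw [sobNorm, hBudef]
    congr 1
    exact tsum_congr fun n => by rw [hwte n]
  rw [HsNorm, hHsf, hsob]
  calc Real.sqrt (∑' j : Freq d, jb j ^ (2*(0:ℝ)) * ‖cmul f u j‖ ^ 2)
      = Real.sqrt Q.toReal := by rw [hRQ]
    _ ≤ Real.sqrt (K * Af * Bu) := Real.sqrt_le_sqrt hQR
    _ = Real.sqrt K * Real.sqrt Af * Real.sqrt Bu := by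
        rw [Real.sqrt_mul (by positivity), Real.sqrt_mul hK0]
    _ ≤ (Real.sqrt K + 1) * Real.sqrt Af * Real.sqrt Bu := by
        have h1 : Real.sqrt K ≤ Real.sqrt K + 1 := by linarith
        apply mul_le_mul_of_nonneg_right _ (Real.sqrt_nonneg _)
        exact mul_le_mul_of_nonneg_right h1 (Real.sqrt_nonneg _)


end
end
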